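/- If A has full row rank n, W = Aᵀvxᵀ with v ≠ 0, and AWx = b, then x lies in range((AW)ᵀ), and consequently x is the minimum norm solution of (AW)z = b. -/

import Mathlib

open Matrix

noncomputable def eNorm {d : ℕ} (v : Fin d → ℝ) : ℝ :=
  ‖(WithLp.equiv 2 (Fin d → ℝ)).symm v‖

lemma vecMulVec_mulVec' {m k : ℕ} (v : Fin m → ℝ) (x z : Fin k → ℝ) :
    (vecMulVec v x).mulVec z = (x ⬝ᵥ z) • v := by
  ext i
  simp [mulVec, vecMulVec_apply, dotProduct, Finset.mul_sum, Finset.sum_mul, mul_assoc,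
    mul_comm, mul_left_comm]

theorem stmt_10 {n d : ℕ} (hnd : n ≤ d) (A : Matrix (Fin n) (Fin d) ℝ)
    (hrank : A.rank = n) (b : Fin n → ℝ) (hb : b ≠ 0)
    (v : Fin n → ℝ) (hv : v ≠ 0) (x : Fin d → ℝ)
    (W : Matrix (Fin d) (Fin d) ℝ) (hW : W = Aᵀ * vecMulVec v x)
    (hsol : (A * W).mulVec x = b) :
    (∃ w : Fin n → ℝ, x = (A * W)ᵀ.mulVec w) ∧
      ∀ z : Fin d → ℝ, (A * W).mulVec z = b → eNorm x ≤ eNorm z := by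
  set u : Fin n → ℝ := (A * Aᵀ).mulVec v with hu
  have key : ∀ z : Fin d → ℝ, (A * W).mulVec z = (x ⬝ᵥ z) • u := by
    intro z
    rw [hW, ← Matrix.mul_assoc, ← Matrix.mulVec_mulVec, vecMulVec_mulVec',
      Matrix.mulVec_smul]
  have hxx : x ⬝ᵥ x ≠ 0 := by
    intro h
    apply hb
    rw [← hsol, key, h, zero_smul]
  have hu0 : u ≠ 0 := by
    intro h
    apply hb
    rw [← hsol, key, h, smul_zero]
  have huu : u ⬝ᵥ u ≠ 0 := by
    simpa [dotProduct_self_eq_zero] using hu0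
  constructor
  · refine ⟨(u ⬝ᵥ u)⁻¹ • u, ?_⟩
    have h1 : (A * W)ᵀ = vecMulVec x u := by
      have : A * W = vecMulVec u x := by
        ext i j
        have := congrFun (key (Pi.single j 1)) i
        simpa [mulVec_single, vecMulVec_apply, dotProduct_single, mul_comm] using this
      rw [this]
      ext i j
      simp [vecMulVec_apply, transpose_apply, mul_comm]
    rw [h1, vecMulVec_mulVec', dotProduct_smul, smul_eq_mul, inv_mul_cancel₀ huu, one_smul]
  · intro z hz
    have hxz : x ⬝ᵥ z = x ⬝ᵥ x := by
      have : (x ⬝ᵥ z) • u = (x ⬝ᵥ x) • u := by rw [← key, ← key, hz, hsol]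
      by_contra hne
      exact hu0 (by
        have := sub_eq_zero.mpr this
        rw [← sub_smul] at this
        exact (smul_eq_zero.mp this).resolve_left (sub_ne_zero.mpr hne))
    -- translate to EuclideanSpace
    set X := (WithLp.equiv 2 (Fin d → ℝ)).symm x
    set Z := (WithLp.equiv 2 (Fin d → ℝ)).symm z
    have hinner : inner ℝ X Z = (‖X‖ : ℝ) ^ 2 := by
      have h1 : (inner ℝ X Z : ℝ) = x ⬝ᵥ z := by
        simp [X, Z, PiLp.inner_apply, dotProduct, RCLike.inner_apply, mul_comm]
      have h2 : (inner ℝ X X : ℝ) = x ⬝ᵥ x := by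
        rw [PiLp.inner_apply]
        simp [X, dotProduct, RCLike.inner_apply, mul_comm, sq]
      rw [h1, hxz, ← h2, real_inner_self_eq_norm_sq]
    have hX0 : ‖X‖ ≠ 0 := by
      intro h
      have : X = 0 := norm_eq_zero.mp h
      apply hxx
      have : x = 0 := by simpa [X] using congrArg (WithLp.equiv 2 (Fin d → ℝ)) this
      simp [this]
    have hle : ‖X‖ ^ 2 ≤ ‖X‖ * ‖Z‖ := by
      rw [← hinner]; exact real_inner_le_norm X Z
    have : ‖X‖ ≤ ‖Z‖ := by
      have hpos : 0 < ‖X‖ := lt_of_le_of_ne (norm_nonneg _) (Ne.symm hX0)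
      nlinarith
    simpa [eNorm, X, Z] using this
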